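/- arXiv:2303.03880 — 3 statements merged into one kernel-verified Lean document; each statement's English description precedes it below -/
import Mathlib

section
/- Fix a packet size d > 0 and a blocklength m > 0. Define V(γ) = 1 − (1+γ)^{−2}, C(γ) = log₂(1+γ), ω(γ) = √(m / V(γ)) · (C(γ) − d/m) · ln 2, and Q(x) = ∫ₓ^∞ (1/√(2π)) e^{−t²/2} dt. Then the decoding error probability ε(γ) = Q(ω(γ)) is strictly monotonically decreasing in the SNR γ on (0, ∞); consequently, for a receiver with channel gain |h|² > 0 and noise power σ² > 0, ε is strictly decreasing in the transmit power p via γ = p|h|²/σ². -/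
/-- The Gaussian Q-function `Q(x) = ∫ₓ^∞ (1/√(2π)) e^{−t²/2} dt`. -/
noncomputable def gaussianQ (x : ℝ) : ℝ :=
  ∫ t in Set.Ioi x, (Real.sqrt (2 * Real.pi))⁻¹ * Real.exp (-t ^ 2 / 2)

/-- Shannon capacity `C(γ) = log₂(1+γ)`. -/
noncomputable def Cap (γ : ℝ) : ℝ := Real.logb 2 (1 + γ)

/-- Channel dispersion `V(γ) = 1 − (1+γ)^{−2}`. -/
noncomputable def Vdisp (γ : ℝ) : ℝ := 1 - ((1 + γ) ^ 2)⁻¹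

/-- The finite-blocklength auxiliary function
`ω(m,γ) = √(m / V(γ)) · (C(γ) − d/m) · ln 2`. -/
noncomputable def ωfbl (d γ m : ℝ) : ℝ :=
  Real.sqrt (m / Vdisp γ) * (Cap γ - d / m) * Real.log 2

open MeasureTheory in
lemma gaussian_integrable :
    Integrable (fun t : ℝ => (Real.sqrt (2 * Real.pi))⁻¹ * Real.exp (-t ^ 2 / 2)) := by
  have h : Integrable (fun t : ℝ => Real.exp (-(1/2 : ℝ) * t ^ 2)) :=
    integrable_exp_neg_mul_sq (by norm_num)
  have h2 := h.const_mul (Real.sqrt (2 * Real.pi))⁻¹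
  convert h2 using 2 with t
  ring_nf

open MeasureTheory in
lemma gaussianQ_strictAnti : StrictAnti gaussianQ := by
  intro x y hxy
  have hint := gaussian_integrable
  set f : ℝ → ℝ := fun t => (Real.sqrt (2 * Real.pi))⁻¹ * Real.exp (-t ^ 2 / 2) with hf
  have hsplit : gaussianQ x = (∫ t in Set.Ioc x y, f t) + gaussianQ y := by
    rw [gaussianQ, gaussianQ, ← setIntegral_union (Set.Ioc_disjoint_Ioi le_rfl)
      measurableSet_Ioi hint.integrableOn hint.integrableOn,
      Set.Ioc_union_Ioi_eq_Ioi hxy.le]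
  have hpos : 0 < ∫ t in Set.Ioc x y, f t := by
    rw [← intervalIntegral.integral_of_le hxy.le]
    refine intervalIntegral.intervalIntegral_pos_of_pos_on hint.intervalIntegrable ?_ hxy
    intro t _
    have h1 : 0 < Real.sqrt (2 * Real.pi) := Real.sqrt_pos.mpr (by positivity)
    positivity
  linarith

lemma Ffun_strictMono (m k : ℝ) (hm : 0 < m) (hk : 0 < k) :
    StrictMonoOn (fun a : ℝ => Real.sqrt m * (a * (Real.log a - k) / Real.sqrt (a ^ 2 - 1)))
      (Set.Ioi (1 : ℝ)) := by
  set F : ℝ → ℝ := fun a => Real.sqrt m * (a * (Real.log a - k) / Real.sqrt (a ^ 2 - 1)) with hF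
  have hder : ∀ a ∈ Set.Ioi (1 : ℝ),
      HasDerivAt F (Real.sqrt m * ((a ^ 2 - 1 - (Real.log a - k)) / Real.sqrt (a ^ 2 - 1) ^ 3)) a := by
    intro a ha
    have ha1 : (1 : ℝ) < a := ha
    have ha0 : (0 : ℝ) < a := lt_trans one_pos ha1
    have hq : (0 : ℝ) < a ^ 2 - 1 := by nlinarith
    set s := Real.sqrt (a ^ 2 - 1) with hs
    have hs0 : 0 < s := Real.sqrt_pos.mpr hq
    have hs2 : s ^ 2 = a ^ 2 - 1 := Real.sq_sqrt hq.le
    have hu : HasDerivAt (fun a : ℝ => a * (Real.log a - k)) (Real.log a - k + 1) a := by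
      have := (hasDerivAt_id a).mul ((Real.hasDerivAt_log ha0.ne').sub_const k)
      refine this.congr_deriv ?_
      simp [ha0.ne']
    have hw : HasDerivAt (fun a : ℝ => Real.sqrt (a ^ 2 - 1))
        ((↑2 * a ^ (2 - 1)) / (2 * s)) a := by
      exact ((hasDerivAt_pow 2 a).sub_const 1).sqrt hq.ne'
    have hdiv := (hu.div hw hs0.ne').const_mul (Real.sqrt m)
    refine hdiv.congr_deriv ?_
    congr 1
    rw [← hs]
    field_simp
    simp only [hs2, Nat.reduceSub, pow_one]
    ring
  refine strictMonoOn_of_deriv_pos (convex_Ioi 1) ?_ ?_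
  · intro a ha
    exact (hder a ha).continuousAt.continuousWithinAt
  · intro a ha
    rw [interior_Ioi] at ha
    rw [(hder a ha).deriv]
    have ha1 : (1 : ℝ) < a := ha
    have ha0 : (0 : ℝ) < a := lt_trans one_pos ha1
    have hq : (0 : ℝ) < a ^ 2 - 1 := by nlinarith
    have hlog : Real.log a ≤ a - 1 := Real.log_le_sub_one_of_pos ha0
    have hnum : 0 < a ^ 2 - 1 - (Real.log a - k) := by nlinarith
    have hs0 : 0 < Real.sqrt (a ^ 2 - 1) := Real.sqrt_pos.mpr hq
    have hm' : 0 < Real.sqrt m := Real.sqrt_pos.mpr hm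
    positivity

lemma omega_eq (d m γ : ℝ) (hm : 0 < m) (hγ : 0 < γ) :
    ωfbl d γ m = Real.sqrt m * ((1 + γ) * (Real.log (1 + γ) - d * Real.log 2 / m)
      / Real.sqrt ((1 + γ) ^ 2 - 1)) := by
  set a := 1 + γ with ha
  have ha1 : (1 : ℝ) < a := by simp [ha]; linarith
  have ha0 : (0 : ℝ) < a := lt_trans one_pos ha1
  have hq : (0 : ℝ) < a ^ 2 - 1 := by nlinarith
  have hV : Vdisp γ = (a ^ 2 - 1) / a ^ 2 := by
    rw [Vdisp, ← ha]
    field_simp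
  have hsqrt : Real.sqrt (m / Vdisp γ) = Real.sqrt m * a / Real.sqrt (a ^ 2 - 1) := by
    rw [hV, div_div_eq_mul_div, Real.sqrt_div (by positivity), Real.sqrt_mul hm.le,
      Real.sqrt_sq ha0.le]
  have hCap : Cap γ = Real.log a / Real.log 2 := by
    rw [Cap, Real.logb, ← ha]
  have hl2 : (0:ℝ) < Real.log 2 := Real.log_pos (by norm_num)
  rw [ωfbl, hsqrt, hCap]
  field_simp

lemma omega_strictMono (d m : ℝ) (hd : 0 < d) (hm : 0 < m) :
    StrictMonoOn (fun γ => ωfbl d γ m) (Set.Ioi (0 : ℝ)) := by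
  intro x hx y hy hxy
  have hx0 : (0:ℝ) < x := hx
  have hy0 : (0:ℝ) < y := hy
  have hk : 0 < d * Real.log 2 / m :=
    div_pos (mul_pos hd (Real.log_pos (by norm_num))) hm
  simp only
  rw [omega_eq d m x hm hx0, omega_eq d m y hm hy0]
  exact Ffun_strictMono m (d * Real.log 2 / m) hm hk
    (by simp [Set.mem_Ioi]; linarith) (by simp [Set.mem_Ioi]; linarith) (by linarith)

/-- For fixed packet size `d > 0` and blocklength `m > 0`, the FBL decoding
error probability `ε(γ) = Q(ω(γ))` is strictly decreasing in the SNR `γ` on `(0, ∞)`;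
consequently, for channel gain `|h|² > 0` and noise power `σ² > 0`, it is strictly
decreasing in the transmit power `p` via `γ = p|h|²/σ²`. -/
theorem statement1 (d m : ℝ) (hd : 0 < d) (hm : 0 < m) :
    StrictAntiOn (fun γ => gaussianQ (ωfbl d γ m)) (Set.Ioi (0 : ℝ)) ∧
    ∀ hsq σsq : ℝ, 0 < hsq → 0 < σsq →
      StrictAntiOn (fun p => gaussianQ (ωfbl d (p * hsq / σsq) m)) (Set.Ioi (0 : ℝ)) := by
  have part1 : StrictAntiOn (fun γ => gaussianQ (ωfbl d γ m)) (Set.Ioi (0 : ℝ)) := by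
    intro x hx y hy hxy
    exact gaussianQ_strictAnti (omega_strictMono d m hd hm hx hy hxy)
  refine ⟨part1, ?_⟩
  intro hsq σsq h1 h2 p hp q hq hpq
  have hp0 : (0:ℝ) < p := hp
  have hq0 : (0:ℝ) < q := hq
  exact part1 (by simp [Set.mem_Ioi]; positivity) (by simp [Set.mem_Ioi]; positivity)
    (by gcongr)
end

section
/- Let Q(x) = ∫ₓ^∞ (1/√(2π)) e^{−t²/2} dt and fix ω̂ ∈ ℝ. With a, b, c defined by a(u) = max{ e^{−u²/2} / (√(2π) Q(u)), u }, b(u) = (1/(√(2π) a(u))) · e^{a(u)u − u²/2}, c(u) = Q(u) − b(u) e^{−a(u)u}, one has for every ω ∈ ℝ the lower bound Q(ω) ≥ 1 − b(−ω̂) e^{a(−ω̂)ω} − c(−ω̂), with equality at ω = ω̂. -/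
/-- `a(u) = max{ e^{−u²/2} / (√(2π) Q(u)), u }`. -/
noncomputable def aQ (u : ℝ) : ℝ :=
  max (Real.exp (-u ^ 2 / 2) / (Real.sqrt (2 * Real.pi) * gaussianQ u)) u

/-- `b(u) = (1/(√(2π) a(u))) · e^{a(u)·u − u²/2}`. -/
noncomputable def bQ (u : ℝ) : ℝ :=
  (Real.sqrt (2 * Real.pi) * aQ u)⁻¹ * Real.exp (aQ u * u - u ^ 2 / 2)

/-- `c(u) = Q(u) − b(u) e^{−a(u)·u}`. -/
noncomputable def cQ (u : ℝ) : ℝ := gaussianQ u - bQ u * Real.exp (-aQ u * u)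


open Set MeasureTheory Real intervalIntegral

noncomputable def phiG (t : ℝ) : ℝ := (Real.sqrt (2 * Real.pi))⁻¹ * Real.exp (-t ^ 2 / 2)

lemma sqrt2pi_pos : 0 < Real.sqrt (2 * Real.pi) :=
  Real.sqrt_pos.2 (by positivity)

lemma integrable_phiG : Integrable phiG := by
  have h := (integrable_exp_neg_mul_sq (by norm_num : (0:ℝ) < 1/2)).const_mul
      (Real.sqrt (2 * Real.pi))⁻¹
  convert h using 2 with t
  unfold phiG; congr 1; ring_nf

lemma integral_phiG : ∫ t, phiG t = 1 := by
  have h : ∫ t : ℝ, Real.exp (-(1/2) * t ^ 2) = Real.sqrt (Real.pi / (1/2)) :=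
    integral_gaussian (1/2)
  have h2 : ∀ t : ℝ, phiG t = (Real.sqrt (2 * Real.pi))⁻¹ * Real.exp (-(1/2) * t ^ 2) := by
    intro t; unfold phiG; ring_nf
  rw [show (fun t : ℝ => phiG t) = fun t => (Real.sqrt (2 * Real.pi))⁻¹ *
      Real.exp (-(1/2) * t ^ 2) from funext h2]
  rw [MeasureTheory.integral_const_mul, h]
  rw [show Real.pi / (1/2) = 2 * Real.pi by ring]
  exact inv_mul_cancel₀ sqrt2pi_pos.ne'

lemma integrableOn_phiG (s : Set ℝ) : IntegrableOn phiG s := integrable_phiG.integrableOn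

lemma gaussianQ_eq (x : ℝ) : gaussianQ x = ∫ t in Set.Ioi x, phiG t := rfl

lemma gaussianQ_pos (x : ℝ) : 0 < gaussianQ x := by
  rw [gaussianQ_eq]
  rw [setIntegral_pos_iff_support_of_nonneg_ae]
  · have : Function.support phiG = Set.univ := by
      ext t; simp [phiG, Function.mem_support]
      positivity
    rw [this]
    simp [Set.inter_univ]
  · filter_upwards with t
    unfold phiG; positivity
  · exact integrableOn_phiG _

lemma Ioi_diff_integral {f : ℝ → ℝ} (hf : ∀ x, IntegrableOn f (Set.Ioi x)) (u ω : ℝ) :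
    (∫ t in Set.Ioi u, f t) - ∫ t in Set.Ioi ω, f t = ∫ t in u..ω, f t := by
  rcases le_total u ω with h | h
  · rw [intervalIntegral.integral_of_le h, ← Set.Ioc_union_Ioi_eq_Ioi h,
      setIntegral_union (Set.Ioc_disjoint_Ioi le_rfl) measurableSet_Ioi
        ((hf u).mono_set Set.Ioc_subset_Ioi_self) (hf ω)]
    ring
  · rw [intervalIntegral.integral_symm, intervalIntegral.integral_of_le h,
      ← Set.Ioc_union_Ioi_eq_Ioi h,
      setIntegral_union (Set.Ioc_disjoint_Ioi le_rfl) measurableSet_Ioi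
        ((hf ω).mono_set Set.Ioc_subset_Ioi_self) (hf u)]
    ring

lemma gaussianQ_add_neg (x : ℝ) : gaussianQ x + gaussianQ (-x) = 1 := by
  have h1 : gaussianQ (-x) = ∫ t in Set.Iic x, phiG t := by
    have h := integral_comp_neg_Ioi (-x) phiG
    simp only [neg_neg] at h
    rw [gaussianQ_eq, ← h]
    congr 1; ext t; unfold phiG; ring_nf
  rw [gaussianQ_eq, h1, add_comm, integral_Iic_add_Ioi (integrableOn_phiG _)
    (integrableOn_phiG _), integral_phiG]

lemma integral_exp_tail {a : ℝ} (ha : 0 < a) (x : ℝ) :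
    ∫ t in Set.Ioi x, Real.exp (-(a * t)) = Real.exp (-(a * x)) / a := by
  have hderiv : ∀ t ∈ Set.Ici x, HasDerivAt (fun s => -Real.exp (-(a * s)) / a)
      (Real.exp (-(a * t))) t := by
    intro t _
    have h : HasDerivAt (fun s : ℝ => -(a * s)) (-a) t := by
      have h0 := ((hasDerivAt_id t).const_mul a).neg
      simp only [mul_one] at h0
      exact h0
    have h3 := (h.exp.neg).div_const a
    have he : -(Real.exp (-(a * t)) * -a) / a = Real.exp (-(a * t)) := by
      field_simp
    rw [he] at h3
    exact h3
  have htend : Filter.Tendsto (fun s => -Real.exp (-(a * s)) / a) Filter.atTop (nhds 0) := by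
    have h0 : Filter.Tendsto (fun s : ℝ => a * s) Filter.atTop Filter.atTop :=
      Filter.Tendsto.const_mul_atTop ha Filter.tendsto_id
    have h1 : Filter.Tendsto (fun s : ℝ => -(a * s)) Filter.atTop Filter.atBot :=
      Filter.tendsto_neg_atTop_atBot.comp h0
    have h2 := Real.tendsto_exp_atBot.comp h1
    have := (h2.neg).div_const a
    simpa using this
  have hint : IntegrableOn (fun t => Real.exp (-(a * t))) (Set.Ioi x) := by
    have := exp_neg_integrableOn_Ioi x ha
    simpa [neg_mul] using this
  have := MeasureTheory.integral_Ioi_of_hasDerivAt_of_tendsto' hderiv hint htend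
  rw [this]; ring

lemma aQ_pos (u : ℝ) : 0 < aQ u :=
  lt_max_iff.2 (Or.inl (div_pos (Real.exp_pos _) (mul_pos sqrt2pi_pos (gaussianQ_pos u))))

lemma aQ_ge (u : ℝ) : u ≤ aQ u := le_max_right _ _

lemma aQ_ratio (u : ℝ) : Real.exp (-u ^ 2 / 2) ≤ Real.sqrt (2 * Real.pi) * gaussianQ u * aQ u := by
  have h := le_max_left (Real.exp (-u ^ 2 / 2) / (Real.sqrt (2 * Real.pi) * gaussianQ u)) u
  have hpos : 0 < Real.sqrt (2 * Real.pi) * gaussianQ u :=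
    mul_pos sqrt2pi_pos (gaussianQ_pos u)
  rw [div_le_iff₀ hpos] at h
  calc Real.exp (-u ^ 2 / 2) ≤ aQ u * (Real.sqrt (2 * Real.pi) * gaussianQ u) := h
    _ = Real.sqrt (2 * Real.pi) * gaussianQ u * aQ u := by ring

lemma bQ_pos (u : ℝ) : 0 < bQ u := by
  unfold bQ
  have := aQ_pos u
  have := sqrt2pi_pos
  positivity

lemma cQ_nonneg (u : ℝ) : 0 ≤ cQ u := by
  unfold cQ bQ
  have ha := aQ_pos u
  have hs := sqrt2pi_pos
  have h := aQ_ratio u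
  rw [sub_nonneg]
  have he : aQ u * u - u ^ 2 / 2 + -aQ u * u = -u ^ 2 / 2 := by ring
  rw [mul_assoc, ← Real.exp_add, he, inv_mul_le_iff₀ (by positivity), mul_comm]
  calc Real.exp (-u ^ 2 / 2) ≤ Real.sqrt (2 * Real.pi) * gaussianQ u * aQ u := h
    _ = gaussianQ u * (Real.sqrt (2 * Real.pi) * aQ u) := by ring

lemma keyUB (u ω : ℝ) : gaussianQ ω ≤ bQ u * Real.exp (-aQ u * ω) + cQ u := by
  set a := aQ u with ha_def
  set b := bQ u with hb_def
  have ha : 0 < a := aQ_pos u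
  have hau : u ≤ a := aQ_ge u
  have hb : 0 < b := bQ_pos u
  have hs := sqrt2pi_pos
  -- the comparison function
  set g : ℝ → ℝ := fun t => a * b * Real.exp (-(a * t)) - phiG t with hg_def
  have hab : a * b = (Real.sqrt (2 * Real.pi))⁻¹ * Real.exp (a * u - u ^ 2 / 2) := by
    rw [hb_def]; unfold bQ
    rw [← ha_def]
    field_simp
  have hg_eq : ∀ t, g t = (Real.sqrt (2 * Real.pi))⁻¹ *
      (Real.exp (a * u - u ^ 2 / 2 - a * t) - Real.exp (-t ^ 2 / 2)) := by
    intro t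
    rw [hg_def]
    simp only
    rw [hab, mul_assoc, ← Real.exp_add]
    unfold phiG
    ring_nf
  -- sign facts
  have hg_nonneg : ∀ t, t ≤ u → 0 ≤ g t := by
    intro t ht
    rw [hg_eq t]
    have : Real.exp (-t ^ 2 / 2) ≤ Real.exp (a * u - u ^ 2 / 2 - a * t) := by
      apply Real.exp_le_exp.2
      nlinarith [mul_nonneg (sub_nonneg.2 ht) (sub_nonneg.2 hau), sq_nonneg (u - t)]
    exact mul_nonneg (by positivity) (sub_nonneg.2 this)
  have hg_nonpos : ∀ t, u ≤ t → t ≤ 2 * a - u → g t ≤ 0 := by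
    intro t ht1 ht2
    rw [hg_eq t]
    have : Real.exp (a * u - u ^ 2 / 2 - a * t) ≤ Real.exp (-t ^ 2 / 2) := by
      apply Real.exp_le_exp.2
      nlinarith [mul_nonneg (sub_nonneg.2 ht1) (sub_nonneg.2 ht1)]
    have h0 : (0:ℝ) ≤ (Real.sqrt (2 * Real.pi))⁻¹ := by positivity
    nlinarith [mul_nonneg h0 (sub_nonneg.2 this)]
  have hg_nonneg2 : ∀ t, 2 * a - u ≤ t → 0 ≤ g t := by
    intro t ht
    rw [hg_eq t]
    have : Real.exp (-t ^ 2 / 2) ≤ Real.exp (a * u - u ^ 2 / 2 - a * t) := by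
      apply Real.exp_le_exp.2
      nlinarith [mul_nonneg (sub_nonneg.2 ht) (sub_nonneg.2 ht)]
    exact mul_nonneg (by positivity) (sub_nonneg.2 this)
  -- integrability
  have hexp_int : ∀ x : ℝ, IntegrableOn (fun t => Real.exp (-(a * t))) (Set.Ioi x) := by
    intro x
    have := exp_neg_integrableOn_Ioi x ha
    simpa [neg_mul] using this
  have hg_int : ∀ x : ℝ, IntegrableOn g (Set.Ioi x) := by
    intro x
    exact ((hexp_int x).const_mul (a * b)).sub (integrableOn_phiG _)
  -- interval integral of g
  have hIexp : ∫ t in u..ω, Real.exp (-(a * t)) =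
      Real.exp (-(a * u)) / a - Real.exp (-(a * ω)) / a := by
    rw [← Ioi_diff_integral hexp_int, integral_exp_tail ha, integral_exp_tail ha]
  have hIphi : ∫ t in u..ω, phiG t = gaussianQ u - gaussianQ ω := by
    rw [← Ioi_diff_integral (fun x => integrableOn_phiG (Set.Ioi x)), gaussianQ_eq,
      gaussianQ_eq]
  have hIg : ∫ t in u..ω, g t =
      b * Real.exp (-(a * u)) - b * Real.exp (-(a * ω)) - gaussianQ u + gaussianQ ω := by
    rw [hg_def]
    simp only
    have hcont1 : Continuous fun t : ℝ => a * b * Real.exp (-(a * t)) := by fun_prop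
    have hcont2 : Continuous phiG := by unfold phiG; fun_prop
    rw [intervalIntegral.integral_sub (hcont1.intervalIntegrable u ω)
      (hcont2.intervalIntegrable u ω),
      intervalIntegral.integral_const_mul, hIexp, hIphi]
    field_simp
    ring
  -- it suffices that the interval integral is nonpositive
  have hc : cQ u = gaussianQ u - b * Real.exp (-(a * u)) := by
    unfold cQ; rw [← hb_def, ← ha_def, neg_mul]
  suffices hle : ∫ t in u..ω, g t ≤ 0 by
    rw [hIg] at hle
    rw [hc, neg_mul]
    linarith
  rcases le_total ω u with h | h
  · rw [intervalIntegral.integral_symm]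
    have : 0 ≤ ∫ t in ω..u, g t :=
      intervalIntegral.integral_nonneg h fun t ht => hg_nonneg t ht.2
    linarith
  · rcases le_total ω (2 * a - u) with h2 | h2
    · have : 0 ≤ ∫ t in u..ω, -g t :=
        intervalIntegral.integral_nonneg h fun t ht =>
          neg_nonneg.2 (hg_nonpos t ht.1 (le_trans ht.2 h2))
      rw [intervalIntegral.integral_neg] at this
      linarith
    · have hsplit := Ioi_diff_integral hg_int u ω
      have hIu : ∫ t in Set.Ioi u, g t = b * Real.exp (-(a * u)) - gaussianQ u := by
        rw [hg_def]
        simp only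
        rw [MeasureTheory.integral_sub ((hexp_int u).const_mul (a * b))
          (integrableOn_phiG _), MeasureTheory.integral_const_mul, integral_exp_tail ha,
          ← gaussianQ_eq]
        field_simp
      have hIω : 0 ≤ ∫ t in Set.Ioi ω, g t :=
        MeasureTheory.setIntegral_nonneg measurableSet_Ioi fun t ht =>
          hg_nonneg2 t (le_trans h2 (le_of_lt ht))
      have hcn : 0 ≤ cQ u := cQ_nonneg u
      rw [hc] at hcn
      rw [← hsplit, hIu]
      linarith

/-- paper's Lemma 3, lower bound: for every `ω̂ ∈ ℝ` and every `ω ∈ ℝ`,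
`Q(ω) ≥ 1 − b(−ω̂) e^{a(−ω̂)ω} − c(−ω̂)`, with equality at `ω = ω̂`. -/
theorem statement5 (w0 : ℝ) :
    (∀ ω : ℝ, 1 - bQ (-w0) * Real.exp (aQ (-w0) * ω) - cQ (-w0) ≤ gaussianQ ω) ∧
    gaussianQ w0 = 1 - bQ (-w0) * Real.exp (aQ (-w0) * w0) - cQ (-w0) := by
  constructor
  · intro ω
    have h := keyUB (-w0) (-ω)
    have he : -aQ (-w0) * -ω = aQ (-w0) * ω := by ring
    rw [he] at h
    have hsum := gaussianQ_add_neg ω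
    linarith
  · have hsum := gaussianQ_add_neg w0
    have hceq : cQ (-w0) = gaussianQ (-w0) - bQ (-w0) * Real.exp (aQ (-w0) * w0) := by
      unfold cQ
      have : -aQ (-w0) * -w0 = aQ (-w0) * w0 := by ring
      rw [this]
    rw [hceq]
    linarith
end

section
/- Fix a packet size d > 0 and an SNR γ > 0, and let ω(m) = √(m / V(γ)) · (C(γ) − d/m) · ln 2 with C(γ) = log₂(1+γ) and V(γ) = 1 − (1+γ)^{−2}. Then the second derivative of ω with respect to m equals −(ln 2 / 4) · m^{−3/2} · V(γ)^{−1/2} · (C(γ) + 3d/m) ≤ 0 for all m > 0; in particular, m ↦ ω(m) is concave on (0, ∞). -/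
section aux

variable {d γ : ℝ}

lemma Vdisp_pos (hγ : 0 < γ) : 0 < Vdisp γ := by
  have h2 : (1:ℝ) < (1 + γ) ^ 2 := by nlinarith
  have : ((1 + γ) ^ 2)⁻¹ < 1 := by
    rw [inv_lt_one_iff₀]; right; exact h2
  unfold Vdisp; linarith

lemma Cap_pos (hγ : 0 < γ) : 0 < Cap γ :=
  Real.logb_pos one_lt_two (by linarith)

/-- On `(0,∞)`, `ωfbl` equals the nicer form. -/
lemma ωfbl_eq (hγ : 0 < γ) {x : ℝ} (hx : 0 < x) :
    ωfbl d γ x = (Real.log 2 / Real.sqrt (Vdisp γ)) *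
      (Cap γ * Real.sqrt x - d / Real.sqrt x) := by
  have hV := Vdisp_pos hγ
  have hsV : 0 < Real.sqrt (Vdisp γ) := Real.sqrt_pos.2 hV
  have hsx : 0 < Real.sqrt x := Real.sqrt_pos.2 hx
  have hxx : Real.sqrt x * Real.sqrt x = x := Real.mul_self_sqrt hx.le
  rw [ωfbl, Real.sqrt_div hx.le]
  have hx2 : Real.sqrt x ^ 2 = x := Real.sq_sqrt hx.le
  set s := Real.sqrt x with hs
  have e1 : x = s ^ 2 := hx2.symm
  rw [e1]
  field_simp

/-- First derivative of the nicer form. -/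
lemma hasDerivAt_phi (hγ : 0 < γ) {x : ℝ} (hx : 0 < x) :
    HasDerivAt (fun y => (Real.log 2 / Real.sqrt (Vdisp γ)) *
        (Cap γ * Real.sqrt y - d / Real.sqrt y))
      ((Real.log 2 / Real.sqrt (Vdisp γ)) *
        (Cap γ / (2 * Real.sqrt x) + d / (2 * (x * Real.sqrt x)))) x := by
  have hsx : 0 < Real.sqrt x := Real.sqrt_pos.2 hx
  have hxx : Real.sqrt x * Real.sqrt x = x := Real.mul_self_sqrt hx.le
  have h1 : HasDerivAt Real.sqrt (1 / (2 * Real.sqrt x)) x := Real.hasDerivAt_sqrt hx.ne'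
  have h2 : HasDerivAt (fun y => d / Real.sqrt y)
      (-(d * (1 / (2 * Real.sqrt x)) / (Real.sqrt x) ^ 2)) x := by
    simpa [div_eq_mul_inv, mul_comm, mul_assoc, neg_div, mul_div_assoc] using
      ((h1.inv hsx.ne').const_mul d)
  have h3 := ((h1.const_mul (Cap γ)).sub h2).const_mul (Real.log 2 / Real.sqrt (Vdisp γ))
  refine h3.congr_deriv ?_
  have hx2 : Real.sqrt x ^ 2 = x := Real.sq_sqrt hx.le
  set s := Real.sqrt x with hs
  have e1 : x = s ^ 2 := hx2.symm
  rw [e1]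
  field_simp
  ring

/-- Derivative of `ωfbl` on `(0,∞)`. -/
lemma hasDerivAt_ωfbl (hγ : 0 < γ) {x : ℝ} (hx : 0 < x) :
    HasDerivAt (fun y => ωfbl d γ y)
      ((Real.log 2 / Real.sqrt (Vdisp γ)) *
        (Cap γ / (2 * Real.sqrt x) + d / (2 * (x * Real.sqrt x)))) x := by
  refine (hasDerivAt_phi (d := d) hγ hx).congr_of_eventuallyEq ?_
  filter_upwards [isOpen_Ioi.mem_nhds (show x ∈ Set.Ioi (0:ℝ) from hx)] with y hy
  exact ωfbl_eq hγ hy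

/-- Second derivative computation. -/
lemma hasDerivAt_phi' (hγ : 0 < γ) {x : ℝ} (hx : 0 < x) :
    HasDerivAt (fun y => (Real.log 2 / Real.sqrt (Vdisp γ)) *
        (Cap γ / (2 * Real.sqrt y) + d / (2 * (y * Real.sqrt y))))
      (-(Real.log 2 / 4) * (x * Real.sqrt x)⁻¹ * (Real.sqrt (Vdisp γ))⁻¹ *
        (Cap γ + 3 * d / x)) x := by
  have hsx : 0 < Real.sqrt x := Real.sqrt_pos.2 hx
  have hxx : Real.sqrt x * Real.sqrt x = x := Real.mul_self_sqrt hx.le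
  have h1 : HasDerivAt Real.sqrt (1 / (2 * Real.sqrt x)) x := Real.hasDerivAt_sqrt hx.ne'
  have h2 : HasDerivAt (fun y => 2 * Real.sqrt y) (2 * (1 / (2 * Real.sqrt x))) x :=
    h1.const_mul 2
  have hA : HasDerivAt (fun y => Cap γ / (2 * Real.sqrt y))
      (-(Cap γ * (2 * (1 / (2 * Real.sqrt x))) / (2 * Real.sqrt x) ^ 2)) x := by
    simpa [div_eq_mul_inv, neg_div, mul_comm, mul_assoc, mul_div_assoc] using
      ((h2.inv (by positivity)).const_mul (Cap γ))
  have h4 : HasDerivAt (fun y => 2 * (y * Real.sqrt y))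
      (2 * (1 * Real.sqrt x + x * (1 / (2 * Real.sqrt x)))) x :=
    ((hasDerivAt_id x).mul h1).const_mul 2
  have hB : HasDerivAt (fun y => d / (2 * (y * Real.sqrt y)))
      (-(d * (2 * (1 * Real.sqrt x + x * (1 / (2 * Real.sqrt x)))) /
        (2 * (x * Real.sqrt x)) ^ 2)) x := by
    simpa [div_eq_mul_inv, neg_div, mul_comm, mul_assoc, mul_div_assoc] using
      ((h4.inv (by positivity)).const_mul d)
  have h5 := (hA.add hB).const_mul (Real.log 2 / Real.sqrt (Vdisp γ))
  refine h5.congr_deriv ?_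
  have hx2 : Real.sqrt x ^ 2 = x := Real.sq_sqrt hx.le
  have hsV : 0 < Real.sqrt (Vdisp γ) := Real.sqrt_pos.2 (Vdisp_pos hγ)
  set s := Real.sqrt x with hs
  have e1 : x = s ^ 2 := hx2.symm
  rw [e1]
  field_simp
  ring

end aux

/-- For fixed `d > 0` and `γ > 0`, the second derivative of `m ↦ ω(m)`
equals `−(ln 2 / 4) · m^{−3/2} · V(γ)^{−1/2} · (C(γ) + 3d/m) ≤ 0` for all `m > 0`;
in particular `m ↦ ω(m)` is concave on `(0, ∞)`. -/
theorem statement7 (d γ : ℝ) (hd : 0 < d) (hγ : 0 < γ) :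
    (∀ m > (0 : ℝ),
      deriv (deriv (fun x => ωfbl d γ x)) m =
        -(Real.log 2 / 4) * (m * Real.sqrt m)⁻¹ * (Real.sqrt (Vdisp γ))⁻¹ *
          (Cap γ + 3 * d / m) ∧
      deriv (deriv (fun x => ωfbl d γ x)) m ≤ 0) ∧
    ConcaveOn ℝ (Set.Ioi (0 : ℝ)) (fun x => ωfbl d γ x) := by
  have hV := Vdisp_pos hγ
  have hsV : 0 < Real.sqrt (Vdisp γ) := Real.sqrt_pos.2 hV
  have hC := Cap_pos hγ
  have hL : 0 < Real.log 2 := Real.log_pos one_lt_two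
  -- deriv of ωfbl equals the explicit first derivative on (0,∞)
  have hderiv1 : ∀ x ∈ Set.Ioi (0:ℝ), deriv (fun y => ωfbl d γ y) x =
      (Real.log 2 / Real.sqrt (Vdisp γ)) *
        (Cap γ / (2 * Real.sqrt x) + d / (2 * (x * Real.sqrt x))) := fun x hx =>
    (hasDerivAt_ωfbl hγ hx).deriv
  have hderiv2 : ∀ m : ℝ, 0 < m → deriv (deriv (fun x => ωfbl d γ x)) m =
      -(Real.log 2 / 4) * (m * Real.sqrt m)⁻¹ * (Real.sqrt (Vdisp γ))⁻¹ *
        (Cap γ + 3 * d / m) := by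
    intro m hm
    have hev : deriv (fun y => ωfbl d γ y) =ᶠ[nhds m]
        (fun x => (Real.log 2 / Real.sqrt (Vdisp γ)) *
          (Cap γ / (2 * Real.sqrt x) + d / (2 * (x * Real.sqrt x)))) := by
      filter_upwards [isOpen_Ioi.mem_nhds (show m ∈ Set.Ioi (0:ℝ) from hm)] with y hy
      exact hderiv1 y hy
    rw [hev.deriv_eq]
    exact (hasDerivAt_phi' hγ hm).deriv
  have hnonpos : ∀ m : ℝ, 0 < m →
      -(Real.log 2 / 4) * (m * Real.sqrt m)⁻¹ * (Real.sqrt (Vdisp γ))⁻¹ *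
        (Cap γ + 3 * d / m) ≤ 0 := by
    intro m hm
    have hsm : 0 < Real.sqrt m := Real.sqrt_pos.2 hm
    have h1 : 0 < (m * Real.sqrt m)⁻¹ := by positivity
    have h2 : 0 < (Real.sqrt (Vdisp γ))⁻¹ := by positivity
    have h3 : 0 < Cap γ + 3 * d / m := by positivity
    have : 0 < (Real.log 2 / 4) * (m * Real.sqrt m)⁻¹ * (Real.sqrt (Vdisp γ))⁻¹ *
        (Cap γ + 3 * d / m) := by positivity
    nlinarith [this]
  refine ⟨fun m hm => ⟨hderiv2 m hm, by rw [hderiv2 m hm]; exact hnonpos m hm⟩, ?_⟩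
  refine concaveOn_of_deriv2_nonpos (convex_Ioi 0) ?_ ?_ ?_ ?_
  · intro x hx
    exact ((hasDerivAt_ωfbl hγ hx).differentiableAt.continuousAt).continuousWithinAt
  · rw [interior_Ioi]
    intro x hx
    exact (hasDerivAt_ωfbl hγ hx).differentiableAt.differentiableWithinAt
  · rw [interior_Ioi]
    intro x hx
    have hev : deriv (fun y => ωfbl d γ y) =ᶠ[nhds x]
        (fun y => (Real.log 2 / Real.sqrt (Vdisp γ)) *
          (Cap γ / (2 * Real.sqrt y) + d / (2 * (y * Real.sqrt y)))) := by
      filter_upwards [isOpen_Ioi.mem_nhds (show x ∈ Set.Ioi (0:ℝ) from hx)] with y hy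
      exact hderiv1 y hy
    exact (((hasDerivAt_phi' (d := d) hγ hx).congr_of_eventuallyEq
      hev).differentiableAt).differentiableWithinAt
  · rw [interior_Ioi]
    intro x hx
    have : deriv^[2] (fun y => ωfbl d γ y) x = deriv (deriv (fun y => ωfbl d γ y)) x := rfl
    rw [this, hderiv2 x hx]
    exact hnonpos x hx
end
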